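/- Let E be a finite-dimensional commutative ℚ-algebra and ρ an algebra automorphism of E such that Tr_{E/ℚ}(x·ρ(x)) > 0 for every nonzero x ∈ E. Then ρ is an involution, i.e., ρ(ρ(x)) = x for all x ∈ E. -/

import Mathlib

open Module Polynomial
open scoped TensorProduct

lemma aux_trace_tmul (E : Type*) [CommRing E] [Algebra ℚ E] [FiniteDimensional ℚ E] (z : E) :
    Algebra.trace ℝ (ℝ ⊗[ℚ] E) ((1 : ℝ) ⊗ₜ[ℚ] z) = algebraMap ℚ ℝ (Algebra.trace ℚ E z) := by
  classical
  let b := Module.finBasis ℚ E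
  let bR := b.baseChange ℝ
  rw [Algebra.trace_eq_matrix_trace bR, Algebra.trace_eq_matrix_trace b]
  rw [Matrix.trace, Matrix.trace, map_sum]
  apply Finset.sum_congr rfl
  intro i _
  rw [Matrix.diag_apply, Matrix.diag_apply, Algebra.leftMulMatrix_eq_repr_mul,
    Algebra.leftMulMatrix_eq_repr_mul]
  have : ((1 : ℝ) ⊗ₜ[ℚ] z) * bR i = (1 : ℝ) ⊗ₜ[ℚ] (z * b i) := by
    show ((1 : ℝ) ⊗ₜ[ℚ] z) * (b.baseChange ℝ) i = _
    rw [Basis.baseChange_apply, Algebra.TensorProduct.tmul_mul_tmul, one_mul]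
  rw [this]
  show (b.baseChange ℝ).repr ((1:ℝ) ⊗ₜ[ℚ] (z * b i)) i = _
  rw [Basis.baseChange_repr_tmul]
  simp [Algebra.smul_def]

lemma aux_trace_eq_zero_of_isNilpotent {K A : Type*} [Field K] [CommRing A] [Algebra K A]
    [FiniteDimensional K A] {x : A} (hx : IsNilpotent x) : Algebra.trace K A x = 0 := by
  have h1 : IsNilpotent (Algebra.lmul K A x) := hx.map (Algebra.lmul K A)
  have h2 := LinearMap.isNilpotent_trace_of_isNilpotent h1
  exact h2.eq_zero

theorem aux_real_side (A : Type*) [CommRing A] [Algebra ℝ A] [FiniteDimensional ℝ A]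
    (σ : A ≃ₐ[ℝ] A)
    (hpos : ∀ x : A, x ≠ 0 → 0 < Algebra.trace ℝ A (x * σ x)) :
    ∀ x : A, σ (σ x) = x := by
  classical
  haveI hArt : IsArtinianRing A := IsArtinianRing.of_finite ℝ A
  -- elements in all maximal ideals are nilpotent
  have hnil : ∀ z : A, (∀ m : Ideal A, m.IsMaximal → z ∈ m) → IsNilpotent z := by
    intro z hz
    exact nilpotent_iff_mem_prime.mpr fun J hJ =>
      hz J ((IsArtinianRing.isPrime_iff_isMaximal J).mp hJ)
  -- nilpotent elements are zero
  have hred : ∀ z : A, IsNilpotent z → z = 0 := by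
    intro z hz
    by_contra hz0
    have h1 : IsNilpotent (z * σ z) := Commute.isNilpotent_mul_right (Commute.all _ _) hz
    have h2 := aux_trace_eq_zero_of_isNilpotent (K := ℝ) h1
    exact (hpos z hz0).ne' h2
  have hmem : ∀ z : A, (∀ m : Ideal A, m.IsMaximal → z ∈ m) → z = 0 :=
    fun z hz => hred z (hnil z hz)
  -- σ stabilizes all maximal ideals
  have hstab : ∀ p : Ideal A, p.IsMaximal → Ideal.comap (σ : A →+* A) p = p := by
    intro p hp
    by_contra hne
    set q := Ideal.comap (σ : A →+* A) p with hqdef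
    have hq : q.IsMaximal := Ideal.comap_isMaximal_of_surjective _ σ.surjective
    have hfin : {I : Ideal A | I.IsMaximal}.Finite := IsArtinianRing.setOfPred_isMaximal_finite A
    set s : Finset (Ideal A) := hfin.toFinset.erase p with hs
    have hqs : q ∈ s := Finset.mem_erase.mpr ⟨hne, hfin.mem_toFinset.mpr hq⟩
    have hI : s.inf id ≠ ⊥ := by
      intro h0
      have hle : s.inf id ≤ p := by rw [h0]; exact bot_le
      obtain ⟨r, hrs, hrp⟩ := (Ideal.IsPrime.inf_le' hp.isPrime).mp hle
      have hrmax : r.IsMaximal := hfin.mem_toFinset.mp (Finset.mem_of_mem_erase hrs)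
      exact (Finset.ne_of_mem_erase hrs) (hrmax.eq_of_le hp.ne_top hrp)
    obtain ⟨e, heI, he0⟩ := Submodule.exists_mem_ne_zero_of_ne_bot hI
    have hz : e * σ e = 0 := by
      apply hmem
      intro m hm
      by_cases hmp : m = p
      · subst hmp
        have heq : e ∈ q := (Finset.inf_le hqs : s.inf id ≤ q) heI
        exact Ideal.mul_mem_left _ _ (Ideal.mem_comap.mp heq)
      · have hms : m ∈ s := Finset.mem_erase.mpr ⟨hmp, hfin.mem_toFinset.mpr hm⟩
        exact Ideal.mul_mem_right _ _ ((Finset.inf_le hms : s.inf id ≤ m) heI)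
    have := hpos e he0
    rw [hz, map_zero] at this
    exact lt_irrefl 0 this
  -- main argument via residue fields
  intro x
  have key : ∀ p : Ideal A, p.IsMaximal → σ (σ x) - x ∈ p := by
    intro p hp
    haveI := hp
    have hcom : Ideal.comap (σ : A →+* A) p = p := hstab p hp
    have hmap : Ideal.map (σ : A →+* A) p = p := by
      conv_lhs => rw [← hcom]
      exact Ideal.map_comap_of_surjective _ σ.surjective p
    letI : Field (A ⧸ p) := Ideal.Quotient.field p
    haveI : Module.Finite ℝ (A ⧸ p) :=
      Module.Finite.of_surjective (Ideal.Quotient.mkₐ ℝ p).toLinearMap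
        (Ideal.Quotient.mkₐ_surjective ℝ p)
    set σ' : (A ⧸ p) ≃ₐ[ℝ] (A ⧸ p) := Ideal.quotientEquivAlg p p σ hmap.symm with hσ'
    have hσ'mk : ∀ a : A, σ' (Ideal.Quotient.mk p a) = Ideal.Quotient.mk p (σ a) :=
      fun a => rfl
    set z : A ⧸ p := Ideal.Quotient.mk p x with hzdef
    -- minpoly of z has degree ≤ 2
    have hzint : IsIntegral ℝ z := IsIntegral.of_finite ℝ z
    have hirr : Irreducible (minpoly ℝ z) := minpoly.irreducible hzint
    have hdeg : (minpoly ℝ z).natDegree ≤ 2 := hirr.natDegree_le_two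
    have hne0 : minpoly ℝ z ≠ 0 := minpoly.ne_zero hzint
    -- z, σ' z, σ' (σ' z) are roots
    have hroot : ∀ w : A ⧸ p, aeval w (minpoly ℝ z) = 0 → aeval (σ' w) (minpoly ℝ z) = 0 := by
      intro w hw
      have h := Polynomial.aeval_algHom_apply σ'.toAlgHom w (minpoly ℝ z)
      simp only [AlgEquiv.toAlgHom_eq_coe, AlgHom.coe_coe, AlgEquiv.coe_algHom] at h
      rw [h, hw, map_zero]
    have h0 : aeval z (minpoly ℝ z) = 0 := minpoly.aeval ℝ z
    have h1 : aeval (σ' z) (minpoly ℝ z) = 0 := hroot z h0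
    have h2 : aeval (σ' (σ' z)) (minpoly ℝ z) = 0 := hroot _ h1
    -- conclude σ' (σ' z) = z
    have hfix : σ' (σ' z) = z := by
      by_contra hcon
      have hz1 : σ' z ≠ z := fun h => hcon (by rw [h, h])
      have hz2 : σ' (σ' z) ≠ σ' z := fun h => hz1 (σ'.injective h)
      -- three distinct roots of a polynomial of degree ≤ 2
      set P : Polynomial (A ⧸ p) := (minpoly ℝ z).map (algebraMap ℝ (A ⧸ p)) with hP
      have hPne : P ≠ 0 :=
        Polynomial.map_ne_zero_iff (algebraMap ℝ (A ⧸ p)).injective |>.mpr hne0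
      have hmem3 : ∀ w : A ⧸ p, aeval w (minpoly ℝ z) = 0 → w ∈ P.roots := by
        intro w hw
        rw [Polynomial.mem_roots hPne]
        rwa [Polynomial.IsRoot, Polynomial.eval_map, ← Polynomial.aeval_def]
      have hsub : ({z, σ' z, σ' (σ' z)} : Finset (A ⧸ p)) ⊆ P.roots.toFinset := by
        intro w hw
        simp only [Finset.mem_insert, Finset.mem_singleton] at hw
        rcases hw with rfl | rfl | rfl
        · exact Multiset.mem_toFinset.mpr (hmem3 _ h0)
        · exact Multiset.mem_toFinset.mpr (hmem3 _ h1)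
        · exact Multiset.mem_toFinset.mpr (hmem3 _ h2)
      have hcard3 : ({z, σ' z, σ' (σ' z)} : Finset (A ⧸ p)).card = 3 :=
        Finset.card_eq_three.mpr ⟨z, σ' z, σ' (σ' z), Ne.symm hz1, Ne.symm hcon, Ne.symm hz2, rfl⟩
      have : 3 ≤ P.roots.toFinset.card := hcard3 ▸ Finset.card_le_card hsub
      have h4 : P.roots.toFinset.card ≤ P.natDegree :=
        le_trans (Multiset.toFinset_card_le _) (Polynomial.card_roots' P)
      have h5 : P.natDegree = (minpoly ℝ z).natDegree :=
        Polynomial.natDegree_map_eq_of_injective (algebraMap ℝ (A ⧸ p)).injective _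
      omega
    have : Ideal.Quotient.mk p (σ (σ x)) = Ideal.Quotient.mk p x := by
      rw [← hσ'mk, ← hσ'mk]; exact hfix
    rwa [Ideal.Quotient.mk_eq_mk_iff_sub_mem] at this
  have : σ (σ x) - x = 0 := hmem _ key
  linear_combination (norm := module) this

theorem stmt1 (E : Type*) [CommRing E] [Algebra ℚ E] [FiniteDimensional ℚ E]
    (ρ : E ≃ₐ[ℚ] E)
    (hpos : ∀ x : E, x ≠ 0 → 0 < Algebra.trace ℚ E (x * ρ x)) :
    ∀ x : E, ρ (ρ x) = x := by
  classical
  set T := Algebra.trace ℚ E with hT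
  -- the symmetrized bilinear form
  set G : LinearMap.BilinForm ℚ E := LinearMap.mk₂ ℚ (fun a c => T (a * ρ c) + T (c * ρ a))
    (by intro a a' c; simp only [add_mul, mul_add, map_add]; ring)
    (by intro r a c; simp only [smul_mul_assoc, mul_smul_comm, map_smul, smul_eq_mul]; ring)
    (by intro a c c'; simp only [add_mul, mul_add, map_add]; ring)
    (by intro a r c; simp only [smul_mul_assoc, mul_smul_comm, map_smul, smul_eq_mul]; ring)
    with hGdef
  have hGapply : ∀ a c : E, G a c = T (a * ρ c) + T (c * ρ a) := by
    intro a c; rw [hGdef]; rfl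
  have hGsymm : G.IsSymm := by
    rw [LinearMap.BilinForm.isSymm_def]
    intro a c
    simp only [RingHom.id_apply, hGapply]
    ring
  haveI : Invertible (2 : ℚ) := invertibleOfNonzero two_ne_zero
  obtain ⟨v, hv⟩ := LinearMap.BilinForm.exists_orthogonal_basis (LinearMap.BilinForm.isSymm_iff.mp hGsymm)
  -- base change to ℝ
  set A := ℝ ⊗[ℚ] E with hA
  set σ : A ≃ₐ[ℝ] A := Algebra.TensorProduct.congr (AlgEquiv.refl (R := ℝ) (A₁ := ℝ)) ρ with hσ
  have hσtmul : ∀ (r : ℝ) (y : E), σ (r ⊗ₜ[ℚ] y) = r ⊗ₜ[ℚ] (ρ y) := by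
    intro r y
    rfl
  set vR := v.baseChange ℝ with hvR
  -- positivity over ℝ
  have hposA : ∀ X : A, X ≠ 0 → 0 < Algebra.trace ℝ A (X * σ X) := by
    intro X hX0
    set c := vR.repr X with hc
    have hX : X = ∑ i, c i • ((1 : ℝ) ⊗ₜ[ℚ] v i) := by
      conv_lhs => rw [← vR.sum_repr X]
      exact Finset.sum_congr rfl fun i _ => by rw [hvR, Basis.baseChange_apply]
    have hσX : σ X = ∑ j, c j • ((1 : ℝ) ⊗ₜ[ℚ] ρ (v j)) := by
      rw [hX, map_sum]
      exact Finset.sum_congr rfl fun j _ => by rw [map_smul, hσtmul]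
    have key : Algebra.trace ℝ A (X * σ X)
        = ∑ i, ∑ j, c i * c j * algebraMap ℚ ℝ (T (v i * ρ (v j))) := by
      conv_lhs => rw [hσX, hX, Finset.sum_mul_sum]
      rw [map_sum]
      apply Finset.sum_congr rfl
      intro i _
      rw [map_sum]
      apply Finset.sum_congr rfl
      intro j _
      rw [smul_mul_smul_comm, Algebra.TensorProduct.tmul_mul_tmul, one_mul, map_smul,
        smul_eq_mul, aux_trace_tmul, hT]
    have swap : ∑ i, ∑ j, c i * c j * algebraMap ℚ ℝ (T (v i * ρ (v j)))
        = ∑ i, ∑ j, c i * c j * algebraMap ℚ ℝ (T (v j * ρ (v i))) := by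
      rw [Finset.sum_comm]
      apply Finset.sum_congr rfl; intro i _
      apply Finset.sum_congr rfl; intro j _
      ring
    have key2 : 2 * Algebra.trace ℝ A (X * σ X)
        = ∑ i, c i * c i * algebraMap ℚ ℝ (G (v i) (v i)) := by
      have e1 : 2 * Algebra.trace ℝ A (X * σ X)
          = ∑ i, ∑ j, c i * c j * algebraMap ℚ ℝ (G (v i) (v j)) := by
        rw [two_mul]
        rw [key]
        nth_rewrite 2 [swap]
        rw [← Finset.sum_add_distrib]
        apply Finset.sum_congr rfl; intro i _
        rw [← Finset.sum_add_distrib]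
        apply Finset.sum_congr rfl; intro j _
        rw [hGapply, map_add]
        ring
      rw [e1]
      apply Finset.sum_congr rfl; intro i _
      rw [Finset.sum_eq_single i]
      · intro j _ hji
        rw [hv (Ne.symm hji), map_zero, mul_zero]
      · intro h; exact absurd (Finset.mem_univ i) h
    have hterm : ∀ i, 0 ≤ c i * c i * algebraMap ℚ ℝ (G (v i) (v i)) := by
      intro i
      apply mul_nonneg (mul_self_nonneg _)
      have : (0:ℚ) < G (v i) (v i) := by
        rw [hGapply]
        have := hpos (v i) (v.ne_zero i)
        linarith
      have : (0:ℝ) < algebraMap ℚ ℝ (G (v i) (v i)) := by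
        rw [show (algebraMap ℚ ℝ) (G (v i) (v i)) = ((G (v i) (v i) : ℚ) : ℝ) from rfl]
        exact_mod_cast this
      linarith
    obtain ⟨i0, hi0⟩ : ∃ i, c i ≠ 0 := by
      by_contra hall
      push_neg at hall
      apply hX0
      rw [hX]
      simp [hall]
    have hpos0 : 0 < c i0 * c i0 * algebraMap ℚ ℝ (G (v i0) (v i0)) := by
      apply mul_pos (mul_self_pos.mpr hi0)
      have : (0:ℚ) < G (v i0) (v i0) := by
        rw [hGapply]
        have := hpos (v i0) (v.ne_zero i0)
        linarith
      rw [show (algebraMap ℚ ℝ) (G (v i0) (v i0)) = ((G (v i0) (v i0) : ℚ) : ℝ) from rfl]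
      exact_mod_cast this
    have hsum : 0 < ∑ i, c i * c i * algebraMap ℚ ℝ (G (v i) (v i)) :=
      Finset.sum_pos' (fun i _ => hterm i) ⟨i0, Finset.mem_univ i0, hpos0⟩
    linarith [key2 ▸ hsum]
  -- apply the real result
  intro x
  have h := aux_real_side A σ hposA ((1 : ℝ) ⊗ₜ[ℚ] x)
  rw [hσtmul, hσtmul] at h
  -- deduce equality in E
  have hcoord := congrArg vR.repr h
  apply v.ext_elem
  intro i
  have hrep : ∀ y : E, vR.repr ((1 : ℝ) ⊗ₜ[ℚ] y) i = algebraMap ℚ ℝ (v.repr y i) := by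
    intro y
    rw [hvR, Basis.baseChange_repr_tmul]
    simp [Algebra.smul_def]
  have := congrFun (congrArg DFunLike.coe hcoord) i
  rw [hrep, hrep] at this
  exact (algebraMap ℚ ℝ).injective this
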